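/- Let n ≥ 1 be an integer and α ∈ [−1, 1]. Define the map A_α : (0,∞)^{2n} → ℝ^{2n} by (A_α u)_i = Σ_{j=1}^{2n} (u_j + u_i)^α (u_j − u_i). Then for all vectors u, v ∈ (0,∞)^{2n} one has Σ_{i=1}^{2n} ((A_α u)_i − (A_α v)_i) · sgn⁺(u_i − v_i) ≤ 0; that is, the generalized Carleman interaction rate k_α(a,b) = (a+b)^α is T-dissipative. -/

import Mathlib

/-- `sgn⁺(a) = 1` if `a > 0` and `0` otherwise. -/
noncomputable def sgnPlus (a : ℝ) : ℝ := if 0 < a then 1 else 0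

private lemma hasDerivAt_aux (α b : ℝ) {x : ℝ} (hbx : 0 < b + x) :
    HasDerivAt (fun x => (b + x) ^ α * (b - x))
      (α * (b + x) ^ (α - 1) * (b - x) + (b + x) ^ α * (-1)) x := by
  have h0 : HasDerivAt (fun x : ℝ => b + x) 1 x := (hasDerivAt_id x).const_add b
  have h1 : HasDerivAt (fun x => (b + x) ^ α) (α * (b + x) ^ (α - 1)) x := by
    have := (Real.hasDerivAt_rpow_const (x := b + x) (p := α) (Or.inl hbx.ne')).comp x h0
    rw [mul_one] at this
    exact this
  have h2 : HasDerivAt (fun x : ℝ => b - x) (-1) x := by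
    simpa using (hasDerivAt_id x).const_sub b
  exact h1.mul h2

private lemma bound_aux {α b x : ℝ} (hα1 : -1 ≤ α) (hα2 : α ≤ 1) (hb : 0 < b) (hx : 0 < x) :
    |α * (b - x)| ≤ b + x := by
  have h2 : |α| ≤ 1 := abs_le.2 ⟨hα1, hα2⟩
  have h3 : |b - x| ≤ b + x := abs_le.2 ⟨by linarith, by linarith⟩
  calc |α * (b - x)| = |α| * |b - x| := abs_mul _ _
    _ ≤ 1 * |b - x| := by
        exact mul_le_mul_of_nonneg_right h2 (abs_nonneg _)
    _ ≤ b + x := by simpa using h3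

private lemma rpow_split {b x : ℝ} (hbx : 0 < b + x) (α : ℝ) :
    (b + x) ^ α = (b + x) ^ (α - 1) * (b + x) := by
  rw [← Real.rpow_add_one hbx.ne' (α - 1)]
  norm_num

/-- antitone in the second slot -/
private lemma anti_aux (α : ℝ) (hα1 : -1 ≤ α) (hα2 : α ≤ 1) {b : ℝ} (hb : 0 < b) :
    AntitoneOn (fun x => (b + x) ^ α * (b - x)) (Set.Ici (0 : ℝ)) := by
  have hpos : ∀ x ∈ Set.Ici (0 : ℝ), 0 < b + x := fun x hx => by
    simp only [Set.mem_Ici] at hx; linarith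
  apply antitoneOn_of_deriv_nonpos (convex_Ici 0)
  · exact fun x hx => ((hasDerivAt_aux α b (hpos x hx)).continuousAt).continuousWithinAt
  · intro x hx
    rw [interior_Ici] at hx
    exact ((hasDerivAt_aux α b (hpos x (Set.mem_Ici.mpr (le_of_lt (Set.mem_Ioi.mp hx))))).differentiableAt).differentiableWithinAt
  · intro x hx
    rw [interior_Ici] at hx
    have hbx : 0 < b + x := by have : (0:ℝ) < x := hx; linarith
    rw [(hasDerivAt_aux α b hbx).deriv]
    have hQ : 0 < (b + x) ^ (α - 1) := Real.rpow_pos_of_pos hbx _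
    have hbnd : α * (b - x) ≤ b + x :=
      le_trans (le_abs_self _) (bound_aux hα1 hα2 hb hx)
    rw [rpow_split hbx α]
    nlinarith [hQ, hbnd]

/-- monotone in the first slot -/
private lemma mono_aux (α : ℝ) (hα1 : -1 ≤ α) (hα2 : α ≤ 1) {c : ℝ} (hc : 0 < c) :
    MonotoneOn (fun y => (y + c) ^ α * (y - c)) (Set.Ici (0 : ℝ)) := by
  have key : ∀ y : ℝ, 0 < c + y →
      HasDerivAt (fun y => (y + c) ^ α * (y - c))
        (α * (c + y) ^ (α - 1) * (c - y) * (-1) + (c + y) ^ α * (-1) * (-1)) y := by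
    intro y hcy
    have := (hasDerivAt_aux α c hcy).neg
    have h2 : (fun y => -((c + y) ^ α * (c - y))) = fun y => (y + c) ^ α * (y - c) := by
      funext y; rw [add_comm c y]; ring
    rw [show (-fun x => (c + x) ^ α * (c - x)) = fun y => -((c + y) ^ α * (c - y)) from rfl, h2] at this
    refine this.congr_deriv ?_
    ring
  have hpos : ∀ y ∈ Set.Ici (0 : ℝ), 0 < c + y := fun y hy => by
    simp only [Set.mem_Ici] at hy; linarith
  apply monotoneOn_of_deriv_nonneg (convex_Ici 0)
  · exact fun y hy => ((key y (hpos y hy)).continuousAt).continuousWithinAt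
  · intro y hy
    rw [interior_Ici] at hy
    exact ((key y (hpos y (Set.mem_Ici.mpr (le_of_lt (Set.mem_Ioi.mp hy))))).differentiableAt).differentiableWithinAt
  · intro y hy
    rw [interior_Ici] at hy
    have hcy : 0 < c + y := by have : (0:ℝ) < y := hy; linarith
    rw [(key y hcy).deriv]
    have hQ : 0 < (c + y) ^ (α - 1) := Real.rpow_pos_of_pos hcy _
    have hbnd : α * (c - y) ≤ c + y :=
      le_trans (le_abs_self _) (bound_aux hα1 hα2 hc hy)
    rw [rpow_split hcy α]
    nlinarith [hQ, hbnd]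

/-- key pointwise inequality -/
private lemma key_ineq (α : ℝ) (hα1 : -1 ≤ α) (hα2 : α ≤ 1) {a b c d : ℝ}
    (hc : 0 < c) (hb : 0 < b) (hca : c ≤ a) (hbd : b ≤ d) :
    (b + a) ^ α * (b - a) ≤ (d + c) ^ α * (d - c) := by
  have ha : 0 < a := lt_of_lt_of_le hc hca
  have step1 : (b + a) ^ α * (b - a) ≤ (b + c) ^ α * (b - c) :=
    anti_aux α hα1 hα2 hb (le_of_lt hc) (le_of_lt ha) hca
  have step2 : (b + c) ^ α * (b - c) ≤ (d + c) ^ α * (d - c) :=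
    mono_aux α hα1 hα2 hc (le_of_lt hb) (le_of_lt (lt_of_lt_of_le hb hbd)) hbd
  linarith

private lemma double_sum_anti {m : ℕ} (D : Fin m → Fin m → ℝ) (s : Fin m → ℝ)
    (hD : ∀ i j, D i j = - D j i) (hterm : ∀ i j, D j i * (s i - s j) ≤ 0) :
    ∑ i, (∑ j, D j i) * s i ≤ 0 := by
  have hS : (∑ i, (∑ j, D j i) * s i) = ∑ i, ∑ j, D j i * s i := by
    apply Finset.sum_congr rfl; intro i _; rw [Finset.sum_mul]
  have h2 : (∑ i, ∑ j, D j i * s i) = ∑ i, ∑ j, (- D j i) * s j := by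
    rw [Finset.sum_comm]
    exact Finset.sum_congr rfl fun j _ => Finset.sum_congr rfl fun i _ => by rw [hD j i]
  have hsum : (∑ i, ∑ j, D j i * s i) + (∑ i, ∑ j, D j i * s i)
      = ∑ i, ∑ j, D j i * (s i - s j) := by
    nth_rewrite 2 [h2]
    rw [← Finset.sum_add_distrib]
    apply Finset.sum_congr rfl; intro i _
    rw [← Finset.sum_add_distrib]
    apply Finset.sum_congr rfl; intro j _
    ring
  have hle : (∑ i, ∑ j, D j i * (s i - s j)) ≤ 0 :=
    Finset.sum_nonpos fun i _ => Finset.sum_nonpos fun j _ => hterm i j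
  rw [hS]; linarith

/-- T-dissipativity of the generalized Carleman interaction rate
`k_α(a,b) = (a+b)^α` for `|α| ≤ 1`: the map
`(A_α u)_i = ∑_j (u_j + u_i)^α (u_j − u_i)` on `(0,∞)^{2n}` satisfies
`∑_i ((A_α u)_i − (A_α v)_i) · sgn⁺(u_i − v_i) ≤ 0`. -/
theorem kalpha_T_dissipative (n : ℕ) (hn : 1 ≤ n) (α : ℝ)
    (hα : -1 ≤ α ∧ α ≤ 1)
    (u v : Fin (2 * n) → ℝ) (hu : ∀ i, 0 < u i) (hv : ∀ i, 0 < v i) :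
    ∑ i, ((∑ j, (u j + u i) ^ α * (u j - u i)) -
        (∑ j, (v j + v i) ^ α * (v j - v i))) * sgnPlus (u i - v i) ≤ 0 := by
  obtain ⟨hα1, hα2⟩ := hα
  have main := double_sum_anti
    (fun j i => (u j + u i) ^ α * (u j - u i) - (v j + v i) ^ α * (v j - v i))
    (fun i => sgnPlus (u i - v i))
    (by
      intro i j
      rw [add_comm (u i) (u j), add_comm (v i) (v j)]
      ring)
    (by
      intro i j
      simp only [sgnPlus]
      split_ifs with h1 h2 h2
      · simp
      · have hk := key_ineq α hα1 hα2 (hv i) (hu j)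
          (le_of_lt (by linarith : v i < u i)) (by linarith : u j ≤ v j)
        nlinarith [hk]
      · have hk := key_ineq α hα1 hα2 (hv j) (hu i)
          (le_of_lt (by linarith : v j < u j)) (by linarith : u i ≤ v i)
        rw [add_comm (u j) (u i), add_comm (v j) (v i)]
        nlinarith [hk]
      · simp)
  calc (∑ i, ((∑ j, (u j + u i) ^ α * (u j - u i)) -
        (∑ j, (v j + v i) ^ α * (v j - v i))) * sgnPlus (u i - v i))
      = ∑ i, (∑ j, ((u j + u i) ^ α * (u j - u i) - (v j + v i) ^ α * (v j - v i)))
          * sgnPlus (u i - v i) := by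
        apply Finset.sum_congr rfl; intro i _
        rw [Finset.sum_sub_distrib]
    _ ≤ 0 := main
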